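/- For every natural number k and every real x such that sin((k+1)x) ≠ 0 and sin(x + iπ/(k+1)) ≠ 0 for all 0 ≤ i ≤ k, one has (k+1)·cot((k+1)x) = ∑_{i=0}^{k} cot(x + iπ/(k+1)). -/

import Mathlib

open Real Finset

/-- Helper: if `sin θ ≠ 0` then `exp (2Iθ) ≠ 1`. -/
lemma exp_two_I_ne_one (θ : ℂ) (h : Complex.sin θ ≠ 0) :
    Complex.exp (2 * Complex.I * θ) ≠ 1 := by
  intro heq
  apply h
  have hu : Complex.exp (θ * Complex.I) ≠ 0 := Complex.exp_ne_zero _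
  have hsq : Complex.exp (θ * Complex.I) * Complex.exp (θ * Complex.I) = 1 := by
    rw [← Complex.exp_add]
    rw [show θ * Complex.I + θ * Complex.I = 2 * Complex.I * θ by ring]
    exact heq
  have hinv : Complex.exp (-θ * Complex.I) = Complex.exp (θ * Complex.I) := by
    rw [show -θ * Complex.I = -(θ * Complex.I) by ring, Complex.exp_neg]
    field_simp
    linear_combination -hsq
  rw [Complex.sin, hinv]
  ring

/-- Helper: cotangent in terms of `exp (2Iθ)`. -/
lemma cot_eq_I_sub (θ : ℂ) (h : Complex.sin θ ≠ 0) :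
    Complex.cot θ = Complex.I -
      2 * Complex.I * (1 - Complex.exp (2 * Complex.I * θ))⁻¹ := by
  have h1 : (1 : ℂ) - Complex.exp (2 * Complex.I * θ) ≠ 0 :=
    sub_ne_zero.mpr (Ne.symm (exp_two_I_ne_one θ h))
  rw [Complex.cot_eq_exp_ratio]
  set v : ℂ := Complex.exp (2 * Complex.I * θ) with hv
  field_simp
  linear_combination (1 + v) * Complex.I_sq

/-- Key algebraic identity via differentiating `∏ (y - ζ^i w) = y^n - w^n`. -/
lemma key_deriv_sum (n : ℕ) (hn : 0 < n) (w : ℂ) :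
    ∑ i ∈ Finset.range n,
      ∏ j ∈ (Finset.range n).erase i,
        (1 - Complex.exp (2 * Real.pi * Complex.I / n) ^ j * w) = n := by
  classical
  set ζ : ℂ := Complex.exp (2 * Real.pi * Complex.I / n) with hζdef
  have hζ : IsPrimitiveRoot ζ n := Complex.isPrimitiveRoot_exp n hn.ne'
  have hP : (Polynomial.X ^ n - Polynomial.C (w ^ n) : Polynomial ℂ) =
      ∏ i ∈ Finset.range n, (Polynomial.X - Polynomial.C (ζ ^ i * w)) :=
    X_pow_sub_C_eq_prod hζ hn rfl
  have hfun : ∀ y : ℂ, ∏ i ∈ Finset.range n, (y - ζ ^ i * w) = y ^ n - w ^ n := by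
    intro y
    have := congrArg (Polynomial.eval y) hP
    simpa [Polynomial.eval_prod] using this.symm
  have hd1 : HasDerivAt (fun y : ℂ => ∏ i ∈ Finset.range n, (y - ζ ^ i * w))
      (∑ i ∈ Finset.range n,
        (∏ j ∈ (Finset.range n).erase i, (1 - ζ ^ j * w)) • (1 : ℂ)) 1 := by
    apply HasDerivAt.fun_finset_prod
    intro i _
    simpa using (hasDerivAt_id (1 : ℂ)).sub_const (ζ ^ i * w)
  have hd2 : HasDerivAt (fun y : ℂ => ∏ i ∈ Finset.range n, (y - ζ ^ i * w))
      ((n : ℂ) * 1 ^ (n - 1)) 1 := by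
    have : HasDerivAt (fun y : ℂ => y ^ n - w ^ n)
        ((n : ℂ) * 1 ^ (n - 1)) 1 := by
      simpa using (hasDerivAt_pow n (1 : ℂ)).sub_const (w ^ n)
    exact this.congr_of_eventuallyEq (Filter.Eventually.of_forall hfun)
  have := hd1.unique hd2
  simpa using this

theorem cot_multiple_sum (k : ℕ) (x : ℝ)
    (hx : Real.sin ((k + 1) * x) ≠ 0)
    (hxi : ∀ i : ℕ, i ≤ k → Real.sin (x + i * Real.pi / (k + 1)) ≠ 0) :
    (k + 1) * Real.cot ((k + 1) * x) =
      ∑ i ∈ Finset.range (k + 1), Real.cot (x + i * Real.pi / (k + 1)) := by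
  classical
  set n : ℕ := k + 1 with hn
  have hnpos : 0 < n := Nat.succ_pos k
  set ζ : ℂ := Complex.exp (2 * Real.pi * Complex.I / n) with hζdef
  set w : ℂ := Complex.exp (2 * Complex.I * x) with hwdef
  -- complex versions of the nonvanishing hypotheses
  have hxC : Complex.sin ((n : ℂ) * x) ≠ 0 := by
    have : ((Real.sin ((k + 1) * x) : ℝ) : ℂ) ≠ 0 := by
      exact_mod_cast Complex.ofReal_ne_zero.mpr hx
    rw [Complex.ofReal_sin] at this
    convert this using 2
    push_cast [hn]
    ring
  have hxiC : ∀ i : ℕ, i < n → Complex.sin ((x : ℂ) + i * Real.pi / n) ≠ 0 := by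
    intro i hi
    have : ((Real.sin (x + i * Real.pi / (k + 1)) : ℝ) : ℂ) ≠ 0 :=
      Complex.ofReal_ne_zero.mpr (hxi i (Nat.lt_succ_iff.mp hi))
    rw [Complex.ofReal_sin] at this
    convert this using 2
    push_cast [hn]
    ring
  -- exp identities
  have hexp_i : ∀ i : ℕ, Complex.exp (2 * Complex.I * ((x : ℂ) + i * Real.pi / n))
      = ζ ^ i * w := by
    intro i
    rw [hζdef, hwdef, ← Complex.exp_nat_mul, ← Complex.exp_add]
    congr 1
    have : (n : ℂ) ≠ 0 := by exact_mod_cast hnpos.ne'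
    field_simp
    ring
  have hexp_n : Complex.exp (2 * Complex.I * ((n : ℂ) * x)) = w ^ n := by
    rw [hwdef, ← Complex.exp_nat_mul]
    congr 1
    ring
  -- nonvanishing of the 1 - ζ^i w factors
  have hfac : ∀ i : ℕ, i < n → (1 : ℂ) - ζ ^ i * w ≠ 0 := by
    intro i hi
    rw [← hexp_i i]
    exact sub_ne_zero.mpr (Ne.symm (exp_two_I_ne_one _ (hxiC i hi)))
  have hwn : (1 : ℂ) - w ^ n ≠ 0 := by
    rw [← hexp_n]
    exact sub_ne_zero.mpr (Ne.symm (exp_two_I_ne_one _ hxC))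
  -- the product formula evaluated at 1
  have hζprim : IsPrimitiveRoot ζ n := Complex.isPrimitiveRoot_exp n hnpos.ne'
  have hprod : ∏ i ∈ Finset.range n, ((1 : ℂ) - ζ ^ i * w) = 1 - w ^ n := by
    have hP : (Polynomial.X ^ n - Polynomial.C (w ^ n) : Polynomial ℂ) =
        ∏ i ∈ Finset.range n, (Polynomial.X - Polynomial.C (ζ ^ i * w)) :=
      X_pow_sub_C_eq_prod hζprim hnpos rfl
    have := congrArg (Polynomial.eval 1) hP
    simpa [Polynomial.eval_prod] using this.symm
  -- the key sum of inverses
  have hkey : ∑ i ∈ Finset.range n, ((1 : ℂ) - ζ ^ i * w)⁻¹ = n * (1 - w ^ n)⁻¹ := by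
    have hd := key_deriv_sum n hnpos w
    rw [← hζdef] at hd
    have herase : ∀ i ∈ Finset.range n,
        ∏ j ∈ (Finset.range n).erase i, ((1 : ℂ) - ζ ^ j * w)
          = (1 - w ^ n) * ((1 : ℂ) - ζ ^ i * w)⁻¹ := by
      intro i hi
      rw [← hprod, ← Finset.prod_erase_mul _ _ hi]
      rw [mul_inv_cancel_right₀ (hfac i (Finset.mem_range.mp hi))]
    rw [Finset.sum_congr rfl herase, ← Finset.mul_sum] at hd
    field_simp at hd ⊢
    simp only [mul_comm w (ζ ^ _)]
    linear_combination hd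
  -- put things together over ℂ
  have hmain : ((n : ℂ)) * Complex.cot ((n : ℂ) * x)
      = ∑ i ∈ Finset.range n, Complex.cot ((x : ℂ) + i * Real.pi / n) := by
    rw [cot_eq_I_sub _ hxC, hexp_n]
    have : ∀ i ∈ Finset.range n, Complex.cot ((x : ℂ) + i * Real.pi / n)
        = Complex.I - 2 * Complex.I * ((1 : ℂ) - ζ ^ i * w)⁻¹ := by
      intro i hi
      rw [cot_eq_I_sub _ (hxiC i (Finset.mem_range.mp hi)), hexp_i i]
    rw [Finset.sum_congr rfl this, Finset.sum_sub_distrib, Finset.sum_const,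
      Finset.card_range, ← Finset.mul_sum, hkey]
    push_cast
    ring
  -- deduce the real statement
  have := congrArg Complex.re hmain
  rw [show ((n : ℂ)) * Complex.cot ((n : ℂ) * x)
      = ((n : ℝ) * Real.cot ((n : ℝ) * x) : ℝ) by
    rw [Complex.ofReal_mul, Complex.ofReal_cot]
    push_cast
    ring_nf] at this
  rw [show (∑ i ∈ Finset.range n, Complex.cot ((x : ℂ) + i * Real.pi / n))
      = ((∑ i ∈ Finset.range n, Real.cot (x + i * Real.pi / n) : ℝ) : ℂ) by
    push_cast [Complex.ofReal_cot]
    rfl] at this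
  rw [Complex.ofReal_re, Complex.ofReal_re] at this
  convert this using 2 <;> push_cast [hn] <;> ring
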